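/- Suppose S is an unbounded set of positive reals, α : S → ℝ satisfies 0 ≤ α(T) < M for a constant M, and Δ : [1,∞) → ℝ is measurable. For each T ∈ S let A_T ⊆ [T/2, T] be measurable, and suppose (i) ∫_{A_T} Δ(x)²/x^{2α(T)+1} dx > c₉ > 0, (ii) μ(A_T) < c₁₀ h₀(T) for a positive function h₀ with x ↦ x^{α(T)+1/2} h₀(x)^{-1/2} monotonically increasing on [T/2,T]. If c₁₁ = √(c₉/(2^{2M+1} c₁₀)), then for each T ∈ S there exists x ∈ [T/2, T] with |Δ(x)| > c₁₁ x^{α(T)+1/2} h₀(x)^{-1/2}. -/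

import Mathlib

open MeasureTheory

theorem stmt3 (S : Set ℝ) (α h₀ Δ : ℝ → ℝ) (A : ℝ → Set ℝ)
    (M c₉ c₁₀ c₁₁ : ℝ)
    (hS : S ⊆ Set.Ioi 0) (hSunbdd : ¬ BddAbove S)
    (hα : ∀ T ∈ S, 0 ≤ α T ∧ α T < M)
    (hΔ : Measurable Δ)
    (hh₀ : ∀ x, 0 < h₀ x)
    (hc₉ : 0 < c₉) (hc₁₀ : 0 < c₁₀)
    (hAsub : ∀ T ∈ S, A T ⊆ Set.Icc (T / 2) T)
    (hAmeas : ∀ T ∈ S, MeasurableSet (A T))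
    (hlow : ∀ T ∈ S, c₉ < ∫ x in A T, (Δ x) ^ 2 / x ^ (2 * α T + 1))
    (hmeasure : ∀ T ∈ S, volume (A T) < ENNReal.ofReal (c₁₀ * h₀ T))
    (hmono : ∀ T ∈ S, MonotoneOn (fun x => x ^ (α T + 1 / 2) * (h₀ x) ^ (-(1 / 2) : ℝ))
      (Set.Icc (T / 2) T))
    (hc₁₁ : c₁₁ = Real.sqrt (c₉ / ((2 : ℝ) ^ (2 * M + 1) * c₁₀))) :
    ∀ T ∈ S, ∃ x ∈ Set.Icc (T / 2) T,
      c₁₁ * x ^ (α T + 1 / 2) * (h₀ x) ^ (-(1 / 2) : ℝ) < |Δ x| := by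
  intro T hT
  by_contra hcon
  push_neg at hcon
  have hT0 : 0 < T := hS hT
  have hT2 : 0 < T / 2 := by linarith
  obtain ⟨ha0, haM⟩ := hα T hT
  have h2M : (0:ℝ) < (2:ℝ) ^ (2 * M + 1) := Real.rpow_pos_of_pos two_pos _
  have hc11sq : c₁₁ ^ 2 = c₉ / ((2:ℝ) ^ (2 * M + 1) * c₁₀) := by
    rw [hc₁₁, Real.sq_sqrt]
    positivity
  have hc11nonneg : 0 ≤ c₁₁ := hc₁₁ ▸ Real.sqrt_nonneg _
  have hh₀T : 0 < h₀ T := hh₀ T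
  set C := c₁₁ ^ 2 * (2:ℝ) ^ (2 * M + 1) / h₀ T with hCdef
  have hC0 : 0 ≤ C := by positivity
  have hp0 : (0:ℝ) ≤ 2 * α T + 1 := by linarith
  -- pointwise bound on A T
  have hbound : ∀ x ∈ A T, ‖Δ x ^ 2 / x ^ (2 * α T + 1)‖ ≤ C := by
    intro x hx
    obtain ⟨hx1, hx2⟩ := hAsub T hT hx
    have hx0 : 0 < x := lt_of_lt_of_le hT2 hx1
    have hΔx : |Δ x| ≤ c₁₁ * x ^ (α T + 1/2) * (h₀ x) ^ (-(1/2) : ℝ) := hcon x ⟨hx1, hx2⟩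
    have hg : x ^ (α T + 1/2) * (h₀ x) ^ (-(1/2):ℝ) ≤ T ^ (α T + 1/2) * (h₀ T) ^ (-(1/2):ℝ) :=
      hmono T hT ⟨hx1, hx2⟩ ⟨by linarith, le_refl T⟩ hx2
    have hΔx2 : |Δ x| ≤ c₁₁ * (T ^ (α T + 1/2) * (h₀ T) ^ (-(1/2):ℝ)) := by
      calc |Δ x| ≤ c₁₁ * (x ^ (α T + 1/2) * (h₀ x) ^ (-(1/2):ℝ)) := by
            rw [← mul_assoc]; exact hΔx
        _ ≤ c₁₁ * (T ^ (α T + 1/2) * (h₀ T) ^ (-(1/2):ℝ)) := by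
            exact mul_le_mul_of_nonneg_left hg hc11nonneg
    have hTsq : (T ^ (α T + 1/2)) ^ 2 = T ^ (2 * α T + 1) := by
      rw [← Real.rpow_natCast (T ^ (α T + 1/2)) 2, ← Real.rpow_mul hT0.le]
      norm_num
      congr 1
      ring
    have hhsq : ((h₀ T) ^ (-(1/2):ℝ)) ^ 2 = (h₀ T)⁻¹ := by
      rw [← Real.rpow_natCast ((h₀ T) ^ (-(1/2):ℝ)) 2, ← Real.rpow_mul hh₀T.le]
      norm_num
      exact Real.rpow_neg_one _
    have hsq : Δ x ^ 2 ≤ c₁₁ ^ 2 * T ^ (2 * α T + 1) * (h₀ T)⁻¹ := by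
      have := pow_le_pow_left₀ (abs_nonneg (Δ x)) hΔx2 2
      rw [sq_abs] at this
      calc Δ x ^ 2 ≤ (c₁₁ * (T ^ (α T + 1/2) * (h₀ T) ^ (-(1/2):ℝ))) ^ 2 := this
        _ = c₁₁ ^ 2 * (T ^ (α T + 1/2)) ^ 2 * ((h₀ T) ^ (-(1/2):ℝ)) ^ 2 := by ring
        _ = c₁₁ ^ 2 * T ^ (2 * α T + 1) * (h₀ T)⁻¹ := by rw [hTsq, hhsq]
    have hxp : (T/2) ^ (2 * α T + 1) ≤ x ^ (2 * α T + 1) :=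
      Real.rpow_le_rpow hT2.le hx1 hp0
    have hxp0 : (0:ℝ) < (T/2) ^ (2 * α T + 1) := Real.rpow_pos_of_pos hT2 _
    have hxq0 : (0:ℝ) < x ^ (2 * α T + 1) := Real.rpow_pos_of_pos hx0 _
    have h1 : Δ x ^ 2 / x ^ (2 * α T + 1)
        ≤ (c₁₁ ^ 2 * T ^ (2 * α T + 1) * (h₀ T)⁻¹) / (T/2) ^ (2 * α T + 1) := by
      gcongr
    have h2 : (c₁₁ ^ 2 * T ^ (2 * α T + 1) * (h₀ T)⁻¹) / (T/2) ^ (2 * α T + 1)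
        = c₁₁ ^ 2 * (2:ℝ) ^ (2 * α T + 1) / h₀ T := by
      have h2e : (2:ℝ) ^ (2 * α T + 1) = T ^ (2 * α T + 1) / (T/2) ^ (2 * α T + 1) := by
        rw [← Real.div_rpow hT0.le hT2.le]
        congr 1
        field_simp
      rw [h2e]
      simp only [div_eq_mul_inv]
      ring
    have h3 : c₁₁ ^ 2 * (2:ℝ) ^ (2 * α T + 1) / h₀ T ≤ C := by
      have h2le : (2:ℝ) ^ (2 * α T + 1) ≤ (2:ℝ) ^ (2 * M + 1) :=
        Real.rpow_le_rpow_of_exponent_le one_le_two (by linarith)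
      rw [hCdef]
      gcongr
    have hnn : 0 ≤ Δ x ^ 2 / x ^ (2 * α T + 1) := by positivity
    rw [Real.norm_eq_abs, abs_of_nonneg hnn]
    calc Δ x ^ 2 / x ^ (2 * α T + 1)
        ≤ (c₁₁ ^ 2 * T ^ (2 * α T + 1) * (h₀ T)⁻¹) / (T/2) ^ (2 * α T + 1) := h1
      _ = c₁₁ ^ 2 * (2:ℝ) ^ (2 * α T + 1) / h₀ T := h2
      _ ≤ C := h3
  have hμfin : volume (A T) < ⊤ := (hmeasure T hT).trans_le le_top
  have hint := norm_setIntegral_le_of_norm_le_const hμfin hbound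
  have hμle : (volume (A T)).toReal ≤ c₁₀ * h₀ T := by
    have := (hmeasure T hT).le
    calc (volume (A T)).toReal ≤ (ENNReal.ofReal (c₁₀ * h₀ T)).toReal :=
          ENNReal.toReal_mono (by simp) this
      _ = c₁₀ * h₀ T := ENNReal.toReal_ofReal (by positivity)
  have hfinal : (∫ x in A T, Δ x ^ 2 / x ^ (2 * α T + 1)) ≤ c₉ := by
    calc (∫ x in A T, Δ x ^ 2 / x ^ (2 * α T + 1))
        ≤ ‖∫ x in A T, Δ x ^ 2 / x ^ (2 * α T + 1)‖ :=
          le_trans (le_abs_self _) (le_of_eq (Real.norm_eq_abs _).symm)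
      _ ≤ C * (volume (A T)).toReal := hint
      _ ≤ C * (c₁₀ * h₀ T) := mul_le_mul_of_nonneg_left hμle hC0
      _ = c₉ := by rw [hCdef, hc11sq]; field_simp
  have := hlow T hT
  linarith
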